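/- Let G be a simple graph with trussness t_G and q ≥ 1 an integer. Then the trussness of the balanced blow-up G^{×q} equals q·t_G. -/

import Mathlib

/-- The support of the edge `{u,v}` in graph `H`. -/
noncomputable def supp {V : Type*} (H : SimpleGraph V) (u v : V) : ℕ :=
  {w | H.Adj u w ∧ H.Adj v w}.ncard

/-- The trussness of `G`. -/
noncomputable def trussness {V : Type*} (G : SimpleGraph V) : ℕ :=
  sSup {k | ∃ H : SimpleGraph V, H ≤ G ∧ H ≠ ⊥ ∧ ∀ u v, H.Adj u v → k ≤ supp H u v}

/-- The balanced blow-up of `G`. -/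
def blowup {V : Type*} (G : SimpleGraph V) (q : ℕ) : SimpleGraph (V × Fin q) where
  Adj x y := G.Adj x.1 y.1
  symm := ⟨fun _ _ h => h.symm⟩
  loopless := ⟨fun x h => G.loopless.irrefl x.1 h⟩

lemma exists_adj {V : Type*} {H : SimpleGraph V} (h : H ≠ ⊥) : ∃ u v, H.Adj u v := by
  by_contra hc
  push_neg at hc
  exact h (by ext u v; simp [hc u v])

lemma ncard_prod' {α β : Type*} (s : Set α) (t : Set β) :
    (s ×ˢ t).ncard = s.ncard * t.ncard := by
  simp only [← Nat.card_coe_set_eq]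
  rw [Nat.card_congr (Equiv.Set.prod s t), Nat.card_prod]

lemma supp_le_card {V : Type*} [Fintype V] (H : SimpleGraph V) (u v : V) :
    supp H u v ≤ Fintype.card V := by
  unfold supp
  calc ({w | H.Adj u w ∧ H.Adj v w}).ncard ≤ (Set.univ : Set V).ncard :=
        Set.ncard_le_ncard (Set.subset_univ _) Set.finite_univ
    _ = Fintype.card V := by simp [Set.ncard_univ]

lemma nat_sSup_le {S : Set ℕ} {n : ℕ} (h : ∀ k ∈ S, k ≤ n) : sSup S ≤ n := by
  rcases S.eq_empty_or_nonempty with rfl | hne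
  · simp
  · exact csSup_le hne h

lemma supp_blowup {V : Type*} (H : SimpleGraph V) (q : ℕ) (u v : V) (i j : Fin q) :
    supp (blowup H q) (u, i) (v, j) = q * supp H u v := by
  have hset : {w : V × Fin q | (blowup H q).Adj (u, i) w ∧ (blowup H q).Adj (v, j) w}
      = {w : V | H.Adj u w ∧ H.Adj v w} ×ˢ (Set.univ : Set (Fin q)) := by
    ext w
    simp [blowup, Set.mem_prod]
  unfold supp
  rw [hset, ncard_prod', Set.ncard_univ, Nat.card_eq_fintype_card, Fintype.card_fin,
    Nat.mul_comm]

/-- Projection of a subgraph of a blow-up. -/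
def projG {V : Type*} {q : ℕ} (H : SimpleGraph (V × Fin q)) : SimpleGraph V where
  Adj u v := u ≠ v ∧ ∃ i j, H.Adj (u, i) (v, j)
  symm := ⟨by rintro u v ⟨hne, i, j, h⟩; exact ⟨hne.symm, j, i, h.symm⟩⟩
  loopless := ⟨by rintro u ⟨hne, -⟩; exact hne rfl⟩

lemma supp_proj_le {V : Type*} [Fintype V] {q : ℕ} {G : SimpleGraph V}
    {H : SimpleGraph (V × Fin q)} (hH : H ≤ blowup G q) (u v : V) (i j : Fin q) :
    supp H (u, i) (v, j) ≤ q * supp (projG H) u v := by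
  have hsub : {w : V × Fin q | H.Adj (u, i) w ∧ H.Adj (v, j) w}
      ⊆ {w : V | (projG H).Adj u w ∧ (projG H).Adj v w} ×ˢ (Set.univ : Set (Fin q)) := by
    rintro ⟨w, l⟩ ⟨h1, h2⟩
    have g1 : G.Adj u w := hH h1
    have g2 : G.Adj v w := hH h2
    exact ⟨⟨⟨g1.ne, i, l, h1⟩, ⟨g2.ne, j, l, h2⟩⟩, trivial⟩
  unfold supp
  calc ({w : V × Fin q | H.Adj (u, i) w ∧ H.Adj (v, j) w}).ncard
      ≤ ({w : V | (projG H).Adj u w ∧ (projG H).Adj v w} ×ˢ (Set.univ : Set (Fin q))).ncard :=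
        Set.ncard_le_ncard hsub (Set.toFinite _)
    _ = q * ({w : V | (projG H).Adj u w ∧ (projG H).Adj v w}).ncard := by
        rw [ncard_prod', Set.ncard_univ, Nat.card_eq_fintype_card, Fintype.card_fin,
          Nat.mul_comm]

theorem blowup_trussness {V : Type*} [Fintype V] [DecidableEq V]
    (G : SimpleGraph V) (q : ℕ) (hq : 1 ≤ q) :
    trussness (blowup G q) = q * trussness G := by
  classical
  unfold trussness
  set S : Set ℕ := {k | ∃ H : SimpleGraph V, H ≤ G ∧ H ≠ ⊥ ∧ ∀ u v, H.Adj u v → k ≤ supp H u v}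
    with hS
  set T : Set ℕ := {k | ∃ H : SimpleGraph (V × Fin q), H ≤ blowup G q ∧ H ≠ ⊥ ∧
      ∀ u v, H.Adj u v → k ≤ supp H u v} with hT
  have hSbdd : BddAbove S := by
    refine ⟨Fintype.card V, ?_⟩
    rintro k ⟨H, -, hne, hsupp⟩
    obtain ⟨u, v, huv⟩ := exists_adj hne
    exact (hsupp u v huv).trans (supp_le_card H u v)
  have hTbdd : BddAbove T := by
    refine ⟨Fintype.card (V × Fin q), ?_⟩
    rintro k ⟨H, -, hne, hsupp⟩
    obtain ⟨u, v, huv⟩ := exists_adj hne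
    exact (hsupp u v huv).trans (supp_le_card H u v)
  apply le_antisymm
  · -- sSup T ≤ q * sSup S
    refine nat_sSup_le ?_
    rintro k ⟨H, hle, hne, hsupp⟩
    have hdiv := Nat.div_add_mod (k + q - 1) q
    have hmod : (k + q - 1) % q < q := Nat.mod_lt _ hq
    have hks : k ≤ q * ((k + q - 1) / q) := by omega
    have hsmem : (k + q - 1) / q ∈ S := by
      refine ⟨projG H, ?_, ?_, ?_⟩
      · rintro u v ⟨hne', i, j, h⟩
        exact hle h
      · obtain ⟨x, y, hxy⟩ := exists_adj hne
        have hadj : (projG H).Adj x.1 y.1 :=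
          ⟨(show G.Adj x.1 y.1 from hle hxy).ne, x.2, y.2, hxy⟩
        intro hbot
        rw [hbot] at hadj
        exact hadj.elim
      · rintro u v ⟨hne', i, j, h⟩
        have h1 : k ≤ supp H (u, i) (v, j) := hsupp _ _ h
        have h2 := supp_proj_le hle u v i j
        have h3 : k ≤ q * supp (projG H) u v := h1.trans h2
        rw [Nat.div_le_iff_le_mul_add_pred (by omega)]
        omega
    have hle' : (k + q - 1) / q ≤ sSup S := le_csSup hSbdd hsmem
    calc k ≤ q * ((k + q - 1) / q) := hks
      _ ≤ q * sSup S := Nat.mul_le_mul_left q hle'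
  · -- q * sSup S ≤ sSup T
    rcases S.eq_empty_or_nonempty with hE | hne
    · rw [hE]
      simp
    · have hmem := Nat.sSup_mem hne hSbdd
      obtain ⟨H, hle, hHne, hsupp⟩ := hmem
      have hTmem : q * sSup S ∈ T := by
        refine ⟨blowup H q, ?_, ?_, ?_⟩
        · intro x y h
          exact hle h
        · obtain ⟨u, v, huv⟩ := exists_adj hHne
          have hadj : (blowup H q).Adj (u, ⟨0, hq⟩) (v, ⟨0, hq⟩) := huv
          intro hbot
          rw [hbot] at hadj
          exact hadj.elim
        · intro x y h
          have h' : H.Adj x.1 y.1 := h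
          have hsb := supp_blowup H q x.1 y.1 x.2 y.2
          calc q * sSup S ≤ q * supp H x.1 y.1 := Nat.mul_le_mul_left q (hsupp _ _ h')
            _ = supp (blowup H q) (x.1, x.2) (y.1, y.2) := hsb.symm
            _ = supp (blowup H q) x y := by rw [Prod.mk.eta, Prod.mk.eta]
      exact le_csSup hTbdd hTmem
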